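/- arXiv:2401.04640 — 2 statements merged into one kernel-verified Lean document; each statement's English description precedes it below -/
import Mathlib

section
/- Let ψ : ℝⁿ → ℝ ∪ {+∞} be proper closed convex and f : ℝⁿ → ℝ differentiable with L-Lipschitz gradient (L > 0); set F = f + ψ, assume F has nonempty minimizer set X* with minimal value F*, let q ∈ [1,2), and let γ satisfy γL ∈ (0,1). Fix x₀, suppose F satisfies q-growth with constant κ > 0 on {y : F(y) ≤ F(x₀)}, i.e. F(y) − F* ≥ (κ/q)‖y − ȳ‖^q for all such y (ȳ the Euclidean projection of y onto X*), and suppose there is R > 0 with ‖x − x*‖ ≤ R for every x with F_γ(x) ≤ F_γ(x₀) and every x* ∈ X*. Then for every x with F_γ(x) ≤ F_γ(x₀): F_γ(x) − F* ≥ κ²γ(1 − γL)/(2(κγ + (1 − γL)R^{2−q})²) · ‖x − x̄‖², where x̄ is the Euclidean projection of x onto X* and F_γ is the Forward–Backward envelope. -/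
noncomputable section
open scoped RealInnerProductSpace

noncomputable section
open scoped RealInnerProductSpace

lemma fbe_descent {n : ℕ} (f : EuclideanSpace ℝ (Fin n) → ℝ) (L : ℝ) (hL0 : 0 ≤ L)
    (hf : Differentiable ℝ f)
    (hlip : ∀ x y, ‖gradient f x - gradient f y‖ ≤ L * ‖x - y‖)
    (x u : EuclideanSpace ℝ (Fin n)) :
    f u ≤ f x + ⟪gradient f x, u - x⟫ + L / 2 * ‖u - x‖ ^ 2 := by
  set v := u - x with hv
  have hgc : Continuous (gradient f) := by
    refine (LipschitzWith.of_dist_le_mul (K := L.toNNReal) (fun a b => ?_)).continuous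
    rw [Real.coe_toNNReal L hL0, dist_eq_norm, dist_eq_norm]
    exact hlip a b
  have hfd : ∀ p, HasFDerivAt f (InnerProductSpace.toDual ℝ _ (gradient f p)) p := by
    intro p
    exact hasGradientAt_iff_hasFDerivAt.1 (hf p).hasGradientAt
  set c : ℝ → EuclideanSpace ℝ (Fin n) := fun t => x + t • v with hc
  have hcd : ∀ t : ℝ, HasDerivAt c v t := by
    intro t
    have := ((hasDerivAt_id t).smul_const v).const_add x
    rw [one_smul] at this
    exact this
  set φ' : ℝ → ℝ := fun t => ⟪gradient f (c t), v⟫ with hφ'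
  have hφd : ∀ t : ℝ, HasDerivAt (fun t => f (c t)) (φ' t) t := by
    intro t
    have := (hfd (c t)).comp_hasDerivAt t (hcd t)
    rw [InnerProductSpace.toDual_apply_apply] at this
    exact this
  have hφ'c : Continuous φ' := (hgc.comp (continuous_const.add (continuous_id.smul continuous_const))).inner continuous_const
  have hint : ∫ t in (0:ℝ)..1, φ' t = f (c 1) - f (c 0) := by
    exact intervalIntegral.integral_eq_sub_of_hasDerivAt (fun t _ => hφd t)
      (hφ'c.intervalIntegrable 0 1)
  have hc1 : c 1 = u := by simp [hc, hv]
  have hc0 : c 0 = x := by simp [hc]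
  have hbound : ∀ t ∈ Set.Icc (0:ℝ) 1, φ' t ≤ ⟪gradient f x, v⟫ + L * t * ‖v‖ ^ 2 := by
    intro t ht
    have h1 : φ' t - ⟪gradient f x, v⟫ = ⟪gradient f (c t) - gradient f x, v⟫ := by
      rw [inner_sub_left]
    have h2 : ⟪gradient f (c t) - gradient f x, v⟫ ≤ ‖gradient f (c t) - gradient f x‖ * ‖v‖ :=
      real_inner_le_norm _ _
    have h3 : ‖gradient f (c t) - gradient f x‖ ≤ L * (t * ‖v‖) := by
      have := hlip (c t) x
      simpa [hc, norm_smul, abs_of_nonneg ht.1, mul_assoc] using this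
    nlinarith [norm_nonneg v]
  have hub : ∫ t in (0:ℝ)..1, φ' t ≤ ∫ t in (0:ℝ)..1, (⟪gradient f x, v⟫ + L * t * ‖v‖ ^ 2) := by
    apply intervalIntegral.integral_mono_on zero_le_one (hφ'c.intervalIntegrable 0 1)
    · exact Continuous.intervalIntegrable (continuous_const.add ((continuous_const.mul continuous_id).mul continuous_const)) 0 1
    · exact hbound
  have heval : ∫ t in (0:ℝ)..1, (⟪gradient f x, v⟫ + L * t * ‖v‖ ^ 2)
      = ⟪gradient f x, v⟫ + L / 2 * ‖v‖ ^ 2 := by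
    have : (fun t : ℝ => ⟪gradient f x, v⟫ + L * t * ‖v‖ ^ 2)
        = fun t : ℝ => ⟪gradient f x, v⟫ + (L * ‖v‖ ^ 2) * t := by
      funext t; ring
    rw [this, intervalIntegral.integral_add (intervalIntegrable_const) (show IntervalIntegrable (fun t : ℝ => (L * ‖v‖ ^ 2) * t) MeasureTheory.volume 0 1 from (continuous_const.mul continuous_id).intervalIntegrable 0 1),
      intervalIntegral.integral_const_mul, integral_id]
    simp; ring
  rw [hint, hc1, hc0] at hub
  rw [heval] at hub
  linarith


lemma ereal_exists_real (e : EReal) (h1 : e ≠ ⊥) (h2 : e ≠ ⊤) : ∃ p : ℝ, e = (p : EReal) := by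
  induction e using EReal.rec with
  | bot => exact absurd rfl h1
  | coe p => exact ⟨p, rfl⟩
  | top => exact absurd rfl h2

lemma lsc_exists_min {E : Type*} [MetricSpace E] (g : E → EReal)
    (hg : LowerSemicontinuous g) {K : Set E} (hK : IsCompact K) (hne : K.Nonempty) :
    ∃ z ∈ K, ∀ u ∈ K, g z ≤ g u := by
  haveI : Nonempty K := hne.to_subtype
  set t : K → Set E := fun u => K ∩ {v | g v ≤ g u} with ht
  have htne : ∀ u : K, (t u).Nonempty := fun u => ⟨u, u.2, by simp⟩
  have htcl : ∀ u : K, IsClosed (t u) := by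
    intro u
    exact hK.isClosed.inter (hg.isClosed_preimage (g u))
  have htcp : ∀ u : K, IsCompact (t u) := fun u => hK.inter_right (hg.isClosed_preimage (g u.1))
  have hdir : Directed (· ⊇ ·) t := by
    intro u v
    rcases le_total (g u.1) (g v.1) with h | h
    · exact ⟨u, subset_rfl, fun w hw => ⟨hw.1, le_trans hw.2 h⟩⟩
    · exact ⟨v, fun w hw => ⟨hw.1, le_trans hw.2 h⟩, subset_rfl⟩
  obtain ⟨z, hz⟩ := IsCompact.nonempty_iInter_of_directed_nonempty_isCompact_isClosed
    t hdir htne htcp htcl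
  simp only [Set.mem_iInter] at hz
  refine ⟨z, (hz (Classical.arbitrary K)).1, fun u hu => (hz ⟨u, hu⟩).2⟩


lemma fbe_arith (κ γ L q R a b d fz sz Fs : ℝ) (hκ : 0 < κ) (hγ : 0 < γ)
    (h1γL : 0 < 1 - γ * L) (hq1 : 1 ≤ q) (hq2 : q < 2) (hR : 0 < R)
    (ha : 0 ≤ a) (hb : 0 ≤ b) (hd0 : 0 ≤ d) (hbR : b ≤ R) (hd : d ≤ a + b)
    (H1 : Fs + κ / q * b ^ q ≤ fz)
    (H2 : fz + (1 - γ * L) / (2 * γ) * a ^ 2 ≤ sz) :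
    Fs + κ ^ 2 * γ * (1 - γ * L) / (2 * (κ * γ + (1 - γ * L) * R ^ (2 - q)) ^ 2) * d ^ 2
      ≤ sz := by
  set S := R ^ (2 - q) with hSdef
  have hS : 0 < S := Real.rpow_pos_of_pos hR _
  set α := (1 - γ * L) / (2 * γ) with hαdef
  set β := κ / (2 * S) with hβdef
  set D := κ * γ + (1 - γ * L) * S with hDdef
  have hα : 0 < α := by positivity
  have hβ : 0 < β := by positivity
  have hD : 0 < D := by positivity
  -- step 1 : b ^ 2 / S ≤ b ^ q  (rpow)
  have step1 : b ^ 2 / S ≤ b ^ q := by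
    rcases eq_or_lt_of_le hb with h0 | h0
    · rw [← h0, Real.zero_rpow (by linarith)]
      simp
    · have e1 : b ^ q = b ^ (2 : ℝ) * b ^ (q - 2) := by
        rw [← Real.rpow_add h0]; ring_nf
      have e2 : b ^ (2 : ℝ) = b ^ 2 := by
        rw [show (2 : ℝ) = ((2 : ℕ) : ℝ) by norm_num, Real.rpow_natCast]
      have e3 : S⁻¹ ≤ b ^ (q - 2) := by
        have h4 : b ^ (2 - q) ≤ S := Real.rpow_le_rpow hb hbR (by linarith)
        have h5 : (0:ℝ) < b ^ (2 - q) := Real.rpow_pos_of_pos h0 _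
        have : b ^ (q - 2) = (b ^ (2 - q))⁻¹ := by
          rw [show q - 2 = -(2 - q) by ring, Real.rpow_neg hb]
        rw [this]
        exact inv_anti₀ h5 h4
      calc b ^ 2 / S = b ^ 2 * S⁻¹ := by ring
        _ ≤ b ^ 2 * b ^ (q - 2) := by
            apply mul_le_mul_of_nonneg_left e3 (by positivity)
        _ = b ^ q := by rw [e1, e2]
  -- step 2 : β * b ^ 2 ≤ κ / q * b ^ q
  have step2 : β * b ^ 2 ≤ κ / q * b ^ q := by
    have hbq : 0 ≤ b ^ q := Real.rpow_nonneg hb q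
    have h6 : κ / 2 ≤ κ / q := by
      apply div_le_div_of_nonneg_left hκ.le (by linarith) (by linarith)
    calc β * b ^ 2 = κ / 2 * (b ^ 2 / S) := by rw [hβdef]; ring
      _ ≤ κ / 2 * b ^ q := by
          apply mul_le_mul_of_nonneg_left step1 (by positivity)
      _ ≤ κ / q * b ^ q := mul_le_mul_of_nonneg_right h6 hbq
  -- combine growth and quadratic terms
  have H3 : Fs + (β * b ^ 2 + α * a ^ 2) ≤ sz := by
    have := step2
    linarith
  -- weighted mean inequality
  have key : α * β / (α + β) * (a + b) ^ 2 ≤ α * a ^ 2 + β * b ^ 2 := by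
    rw [div_mul_eq_mul_div, div_le_iff₀ (by positivity)]
    nlinarith [sq_nonneg (α * a - β * b)]
  -- constant comparison
  have hratio : α * β / (α + β) = κ * (1 - γ * L) / (2 * D) := by
    rw [hαdef, hβdef, hDdef]
    field_simp
    ring
  have hc : κ ^ 2 * γ * (1 - γ * L) / (2 * D ^ 2) ≤ α * β / (α + β) := by
    have hsub : 0 ≤ D - κ * γ := by rw [hDdef]; nlinarith [mul_nonneg h1γL.le hS.le]
    rw [hratio, div_le_div_iff₀ (by positivity) (by positivity)]
    nlinarith [mul_nonneg (mul_nonneg (mul_nonneg hκ.le h1γL.le) hD.le) hsub]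
  have hc0 : 0 ≤ κ ^ 2 * γ * (1 - γ * L) / (2 * D ^ 2) := by positivity
  have hdsq : d ^ 2 ≤ (a + b) ^ 2 := pow_le_pow_left₀ hd0 hd 2
  calc Fs + κ ^ 2 * γ * (1 - γ * L) / (2 * D ^ 2) * d ^ 2
      ≤ Fs + κ ^ 2 * γ * (1 - γ * L) / (2 * D ^ 2) * (a + b) ^ 2 := by
        exact add_le_add_right (mul_le_mul_of_nonneg_left hdsq hc0) Fs
    _ ≤ Fs + α * β / (α + β) * (a + b) ^ 2 := by
        exact add_le_add_right (mul_le_mul_of_nonneg_right hc (sq_nonneg (a + b))) Fs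
    _ ≤ Fs + (β * b ^ 2 + α * a ^ 2) := by linarith
    _ ≤ sz := H3

/-- let `ψ : ℝⁿ → ℝ ∪ {+∞}` (modeled as an `EReal`-valued function never
taking `⊥`) be proper closed convex and `f : ℝⁿ → ℝ` differentiable with `L`-Lipschitz
gradient (`L > 0`); set `F = f + ψ`, with nonempty minimizer set `X*` and (real) minimal
value `F*`, let `q ∈ [1,2)` and let `γ` satisfy `γL ∈ (0,1)`.  Let `F_γ` be the
Forward–Backward envelope.  Fix `x₀`, suppose `F` satisfies `q`-growth with constant
`κ > 0` on `{y : F(y) ≤ F(x₀)}` (where `ybar` denotes the Euclidean projection of `y`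
onto `X*`), and suppose there is `R > 0` with `‖x − x*‖ ≤ R` for every `x` with
`F_γ(x) ≤ F_γ(x₀)` and every `x* ∈ X*`.  Then for every `x` with `F_γ(x) ≤ F_γ(x₀)`:
`F_γ(x) − F* ≥ κ²γ(1 − γL)/(2(κγ + (1 − γL)R^{2−q})²) · ‖x − xbar‖²`. -/
theorem forward_backward_envelope_q_growth (n : ℕ)
    (ψ : EuclideanSpace ℝ (Fin n) → EReal)
    (hψbot : ∀ x, ψ x ≠ ⊥) (hψproper : ∃ x, ψ x ≠ ⊤)
    (hψclosed : LowerSemicontinuous ψ)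
    (hψconvex : ∀ (u v : EuclideanSpace ℝ (Fin n)) (a c : ℝ), 0 ≤ a → 0 ≤ c → a + c = 1 →
      ψ (a • u + c • v) ≤ (a : EReal) * ψ u + (c : EReal) * ψ v)
    (f : EuclideanSpace ℝ (Fin n) → ℝ) (L : ℝ) (hL : 0 < L)
    (hf : Differentiable ℝ f)
    (hlip : ∀ x y, ‖gradient f x - gradient f y‖ ≤ L * ‖x - y‖)
    (F : EuclideanSpace ℝ (Fin n) → EReal)
    (hF : ∀ x, F x = (f x : EReal) + ψ x)
    (Fs : ℝ) (Xs : Set (EuclideanSpace ℝ (Fin n)))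
    (hXsne : Xs.Nonempty) (hXs : Xs = {y | F y = (Fs : EReal)})
    (hmin : ∀ y, (Fs : EReal) ≤ F y)
    (q γ : ℝ) (hq1 : 1 ≤ q) (hq2 : q < 2) (hγL0 : 0 < γ * L) (hγL1 : γ * L < 1)
    (Fγ : EuclideanSpace ℝ (Fin n) → EReal)
    (hFγ : ∀ x, Fγ x = ⨅ u,
      ((f x + ⟪gradient f x, u - x⟫ + 1 / (2 * γ) * ‖u - x‖ ^ 2 : ℝ) : EReal) + ψ u)
    (x₀ : EuclideanSpace ℝ (Fin n)) (κ : ℝ) (hκ : 0 < κ)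
    (hgrowth : ∀ y, F y ≤ F x₀ → ∀ ybar ∈ Xs, (∀ z ∈ Xs, ‖y - ybar‖ ≤ ‖y - z‖) →
      ((Fs + κ / q * ‖y - ybar‖ ^ q : ℝ) : EReal) ≤ F y)
    (R : ℝ) (hR : 0 < R)
    (hbound : ∀ x, Fγ x ≤ Fγ x₀ → ∀ xs ∈ Xs, ‖x - xs‖ ≤ R) :
    ∀ x, Fγ x ≤ Fγ x₀ → ∀ xbar ∈ Xs, (∀ z ∈ Xs, ‖x - xbar‖ ≤ ‖x - z‖) →
      ((Fs + κ ^ 2 * γ * (1 - γ * L) / (2 * (κ * γ + (1 - γ * L) * R ^ (2 - q)) ^ 2)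
          * ‖x - xbar‖ ^ 2 : ℝ) : EReal) ≤ Fγ x := by
  intro x hx xbar hxbarXs hxproj
  have hγ : 0 < γ := by nlinarith
  have h1γL : 0 < 1 - γ * L := by linarith
  set α : ℝ := (1 - γ * L) / (2 * γ) with hαdef
  have hα : 0 < α := by positivity
  set T : EuclideanSpace ℝ (Fin n) → EuclideanSpace ℝ (Fin n) → EReal :=
    fun y u => ((f y + ⟪gradient f y, u - y⟫ + 1 / (2 * γ) * ‖u - y‖ ^ 2 : ℝ) : EReal) + ψ u
    with hT
  have hFγT : ∀ y, Fγ y = ⨅ u, T y u := hFγ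
  have hid : 1 / (2 * γ) = α + L / 2 := by rw [hαdef]; field_simp; ring
  have hlowT : ∀ y u, ((Fs + α * ‖u - y‖ ^ 2 : ℝ) : EReal) ≤ T y u := by
    intro y u
    by_cases hu : ψ u = ⊤
    · rw [hT]
      simp only [hu, EReal.add_top_of_ne_bot (EReal.coe_ne_bot _)]
      exact le_top
    · obtain ⟨p, hp⟩ := ereal_exists_real (ψ u) (hψbot u) hu
      have hFu : Fs ≤ f u + p := by
        have h1 := hmin u
        rw [hF u, hp, ← EReal.coe_add, EReal.coe_le_coe_iff] at h1
        exact h1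
      have hdes := fbe_descent f L hL.le hf hlip y u
      rw [hT]
      simp only [hp]
      rw [← EReal.coe_add, EReal.coe_le_coe_iff, hid]
      linarith
  have hFγleF : ∀ y, Fγ y ≤ F y := by
    intro y
    have h1 : T y y = F y := by
      rw [hT, hF y]
      simp
    rw [hFγT y, ← h1]
    exact iInf_le _ y
  obtain ⟨u₁, hu₁⟩ := hψproper
  obtain ⟨p₁, hp₁⟩ := ereal_exists_real (ψ u₁) (hψbot u₁) hu₁
  set Tval : ℝ := f x + ⟪gradient f x, u₁ - x⟫ + 1 / (2 * γ) * ‖u₁ - x‖ ^ 2 + p₁ with hTv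
  have hTu₁ : T x u₁ = (Tval : EReal) := by
    rw [hT]; simp only [hp₁, ← EReal.coe_add, hTv]
  have hTvalFs : Fs + α * ‖u₁ - x‖ ^ 2 ≤ Tval := by
    have h1 := hlowT x u₁
    rwa [hTu₁, EReal.coe_le_coe_iff] at h1
  set r : ℝ := Real.sqrt ((Tval - Fs) / α) with hr
  have hmemK : ∀ u, T x u ≤ (Tval : EReal) → u ∈ Metric.closedBall x r := by
    intro u hu
    have h1 := le_trans (hlowT x u) hu
    rw [EReal.coe_le_coe_iff] at h1
    have h2 : ‖u - x‖ ^ 2 ≤ (Tval - Fs) / α := by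
      rw [le_div_iff₀ hα]; nlinarith
    have h3 : ‖u - x‖ ≤ r := by
      rw [hr]
      have h4 := Real.sqrt_le_sqrt h2
      rwa [Real.sqrt_sq (norm_nonneg _)] at h4
    rwa [Metric.mem_closedBall, dist_eq_norm]
  have hlscT : LowerSemicontinuous (T x) := by
    have h1 : Continuous (fun u : EuclideanSpace ℝ (Fin n) =>
        ((f x + ⟪gradient f x, u - x⟫ + 1 / (2 * γ) * ‖u - x‖ ^ 2 : ℝ) : EReal)) :=
      continuous_coe_real_ereal.comp (by
        have h2 : Continuous (fun u : EuclideanSpace ℝ (Fin n) => u - x) :=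
          continuous_id.sub continuous_const
        exact (continuous_const.add (continuous_const.inner h2)).add
          (continuous_const.mul ((h2.norm).pow 2)))
    exact h1.lowerSemicontinuous.add' hψclosed
      (fun u => EReal.continuousAt_add (Or.inl (EReal.coe_ne_top _))
        (Or.inl (EReal.coe_ne_bot _)))
  obtain ⟨z, hzK, hzmin⟩ := lsc_exists_min (T x) hlscT (isCompact_closedBall x r)
    ⟨u₁, hmemK u₁ (le_of_eq hTu₁)⟩
  have hzglob : ∀ u, T x z ≤ T x u := by
    intro u
    by_cases hu : u ∈ Metric.closedBall x r
    · exact hzmin u hu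
    · rw [Metric.mem_closedBall, dist_eq_norm, not_le] at hu
      have hdiv : 0 ≤ (Tval - Fs) / α := by
        have : 0 ≤ α * ‖u₁ - x‖ ^ 2 := by positivity
        apply div_nonneg (by linarith) hα.le
      have hr2 : r ^ 2 = (Tval - Fs) / α := Real.sq_sqrt hdiv
      have hr0 : 0 ≤ r := Real.sqrt_nonneg _
      have h5 : Tval ≤ Fs + α * ‖u - x‖ ^ 2 := by
        have h6 : r ^ 2 ≤ ‖u - x‖ ^ 2 := by nlinarith
        rw [hr2, div_le_iff₀ hα] at h6 <;> nlinarith [h6]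
      calc T x z ≤ T x u₁ := hzmin u₁ (hmemK u₁ (le_of_eq hTu₁))
        _ = (Tval : EReal) := hTu₁
        _ ≤ ((Fs + α * ‖u - x‖ ^ 2 : ℝ) : EReal) := EReal.coe_le_coe_iff.2 h5
        _ ≤ T x u := hlowT x u
  have hFγx : Fγ x = T x z := by
    refine le_antisymm ?_ ?_
    · rw [hFγT x]; exact iInf_le _ z
    · rw [hFγT x]; exact le_iInf hzglob
  have hTztop : T x z ≠ ⊤ := by
    have h1 : T x z ≤ (Tval : EReal) := le_of_le_of_eq (hzglob u₁) hTu₁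
    exact ne_top_of_le_ne_top (EReal.coe_ne_top _) h1
  have hψz : ψ z ≠ ⊤ := by
    intro h
    rw [hT] at hTztop
    simp only [h, EReal.add_top_of_ne_bot (EReal.coe_ne_bot _)] at hTztop
    exact hTztop rfl
  obtain ⟨pz, hpz⟩ := ereal_exists_real (ψ z) (hψbot z) hψz
  set sz : ℝ := f x + ⟪gradient f x, z - x⟫ + 1 / (2 * γ) * ‖z - x‖ ^ 2 + pz with hszdef
  have hTz : T x z = (sz : EReal) := by
    rw [hT]; simp only [hpz, ← EReal.coe_add, hszdef]
  have hFz : F z = ((f z + pz : ℝ) : EReal) := by rw [hF z, hpz, EReal.coe_add]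
  have hdes := fbe_descent f L hL.le hf hlip x z
  have hFzsz : f z + pz + α * ‖z - x‖ ^ 2 ≤ sz := by rw [hszdef, hid]; linarith
  have hFzFγx : F z ≤ Fγ x := by
    rw [hFz, hFγx, hTz, EReal.coe_le_coe_iff]
    nlinarith [sq_nonneg ‖z - x‖]
  have hFzFx₀ : F z ≤ F x₀ := le_trans (le_trans hFzFγx hx) (hFγleF x₀)
  have hFγzFγx₀ : Fγ z ≤ Fγ x₀ := le_trans (le_trans (hFγleF z) hFzFγx) hx
  have hXscl : IsClosed Xs := by
    have hFlsc : LowerSemicontinuous F := by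
      have hFeq : F = fun y => ((f y : ℝ) : EReal) + ψ y := funext hF
      rw [hFeq]
      exact ((continuous_coe_real_ereal.comp hf.continuous).lowerSemicontinuous).add'
        hψclosed (fun y => EReal.continuousAt_add (Or.inl (EReal.coe_ne_top _))
          (Or.inl (EReal.coe_ne_bot _)))
    have hXs2 : Xs = F ⁻¹' Set.Iic ((Fs : ℝ) : EReal) := by
      rw [hXs]
      ext y
      simp only [Set.mem_setOf_eq, Set.mem_preimage, Set.mem_Iic]
      exact ⟨fun h => h.le, fun h => le_antisymm h (hmin y)⟩
    rw [hXs2]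
    exact hFlsc.isClosed_preimage _
  obtain ⟨zbar, hzbarXs, hzbard⟩ := hXscl.exists_infDist_eq_dist hXsne z
  have hzproj : ∀ w ∈ Xs, ‖z - zbar‖ ≤ ‖z - w‖ := by
    intro w hw
    rw [← dist_eq_norm, ← dist_eq_norm, ← hzbard]
    exact Metric.infDist_le_dist_of_mem hw
  have hgrow := hgrowth z hFzFx₀ zbar hzbarXs hzproj
  rw [hFz, EReal.coe_le_coe_iff] at hgrow
  have hbR := hbound z hFγzFγx₀ zbar hzbarXs
  have hdtri : ‖x - xbar‖ ≤ ‖z - x‖ + ‖z - zbar‖ := by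
    have h1 := hxproj zbar hzbarXs
    have h2 : ‖x - zbar‖ ≤ ‖x - z‖ + ‖z - zbar‖ := by
      have h3 : x - zbar = (x - z) + (z - zbar) := by abel
      rw [h3]; exact norm_add_le _ _
    rw [norm_sub_rev x z] at h2
    linarith
  rw [hFγx, hTz, EReal.coe_le_coe_iff]
  rw [hαdef] at hFzsz
  exact fbe_arith κ γ L q R ‖z - x‖ ‖z - zbar‖ ‖x - xbar‖ (f z + pz) sz Fs hκ hγ h1γL
    hq1 hq2 hR (norm_nonneg _) (norm_nonneg _) (norm_nonneg _) hbR hdtri hgrow hFzsz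
end
end
end

section
/- Let F_γ : ℝⁿ → ℝ be convex and differentiable with block coordinate-wise Lipschitz gradient with constants Lᵢ > 0, let X* ⊆ ℝⁿ be nonempty closed convex and F* ∈ ℝ with F_γ(x*) ≤ F* for every x* ∈ X*, and suppose the 2-growth condition F_γ(x) − F* ≥ (κ̄/2)‖x − x̄‖₁² holds for all x ∈ ℝⁿ with some κ̄ > 0, where x̄ is the ‖·‖₁-projection of x onto X*. Define Tᵢx := x − (1/Lᵢ) Uᵢ Uᵢᵀ∇F_γ(x). Then for every x ∈ ℝⁿ: (1/N) ∑_{i=1}^{N} [ (1/2)‖Tᵢx − (Tᵢx)‾‖₁² + F_γ(Tᵢx) − F* ] ≤ (1 − κ̄/(N(1+κ̄))) · [ (1/2)‖x − x̄‖₁² + F_γ(x) − F* ], where (Tᵢx)‾ is the ‖·‖₁-projection of Tᵢx onto X*. -/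
noncomputable section
open scoped RealInnerProductSpace

/-- `blockProj b i x` models `Uᵢ Uᵢᵀ x`: the vector of `ℝⁿ` keeping the coordinates of block
`i` (as given by the block assignment `b : Fin n → Fin N`) and zeroing the others. -/
def blockProj {n N : ℕ} (b : Fin n → Fin N) (i : Fin N) (x : EuclideanSpace ℝ (Fin n)) :
    EuclideanSpace ℝ (Fin n) :=
  (EuclideanSpace.equiv (Fin n) ℝ).symm (fun j => if b j = i then x j else 0)

/-- The squared weighted norm `‖x‖₁² = ∑ᵢ Lᵢ ‖Uᵢᵀ x‖²`. -/
def wnormSq {n N : ℕ} (b : Fin n → Fin N) (L : Fin N → ℝ)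
    (x : EuclideanSpace ℝ (Fin n)) : ℝ :=
  ∑ i : Fin N, L i * ‖blockProj b i x‖ ^ 2

/-- The weighted norm `‖x‖₁ = (∑ᵢ Lᵢ ‖Uᵢᵀ x‖²)^{1/2}`. -/
def wnorm {n N : ℕ} (b : Fin n → Fin N) (L : Fin N → ℝ)
    (x : EuclideanSpace ℝ (Fin n)) : ℝ :=
  Real.sqrt (wnormSq b L x)

/-- The coordinate gradient step `Tᵢ x = x − (1/Lᵢ) Uᵢ Uᵢᵀ ∇F_γ(x)`. -/
def coordStep {n N : ℕ} (b : Fin n → Fin N) (L : Fin N → ℝ)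
    (Fγ : EuclideanSpace ℝ (Fin n) → ℝ) (i : Fin N) (x : EuclideanSpace ℝ (Fin n)) :
    EuclideanSpace ℝ (Fin n) :=
  x - (1 / L i) • blockProj b i (gradient Fγ x)

variable {n N : ℕ} (b : Fin n → Fin N) (i : Fin N)

lemma blockProj_apply (x : EuclideanSpace ℝ (Fin n)) (j : Fin n) :
    blockProj b i x j = if b j = i then x j else 0 := rfl

lemma blockProj_smul (c : ℝ) (x : EuclideanSpace ℝ (Fin n)) :
    blockProj b i (c • x) = c • blockProj b i x := by
  ext j
  simp only [blockProj_apply, PiLp.smul_apply, smul_eq_mul]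
  split <;> simp

lemma blockProj_sub (x y : EuclideanSpace ℝ (Fin n)) :
    blockProj b i (x - y) = blockProj b i x - blockProj b i y := by
  ext j
  simp only [blockProj_apply, PiLp.sub_apply]
  split <;> simp

lemma sum_blockProj (x : EuclideanSpace ℝ (Fin n)) :
    ∑ i : Fin N, blockProj b i x = x := by
  ext j
  rw [WithLp.ofLp_sum, Finset.sum_apply]
  simp [blockProj_apply]

lemma inner_blockProj (u v : EuclideanSpace ℝ (Fin n)) :
    ⟪blockProj b i u, v⟫ = ⟪blockProj b i u, blockProj b i v⟫ := by
  simp only [PiLp.inner_apply, RCLike.inner_apply, blockProj_apply, starRingEnd_apply, star_trivial]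
  refine Finset.sum_congr rfl fun j _ => ?_
  by_cases h : b j = i <;> simp [h]

lemma wnormSq_nonneg (L : Fin N → ℝ) (hL : ∀ i, 0 < L i) (x : EuclideanSpace ℝ (Fin n)) :
    0 ≤ wnormSq b L x :=
  Finset.sum_nonneg fun i _ => mul_nonneg (hL i).le (by positivity)

lemma blockProj_blockProj (j : Fin N) (x : EuclideanSpace ℝ (Fin n)) :
    blockProj b j (blockProj b i x) = if j = i then blockProj b i x else 0 := by
  split
  · subst ‹j = i›; ext k; simp only [blockProj_apply]; split <;> simp
  · ext k
    simp only [blockProj_apply]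
    rcases eq_or_ne (b k) j with h | h
    · simp [h, Ne.symm ‹j ≠ i›]
      intro hki
      exact absurd (h ▸ hki) ‹j ≠ i›
    · simp [h]

lemma wnormSq_sub_smul (L : Fin N → ℝ) (hL : ∀ i, 0 < L i)
    (u w : EuclideanSpace ℝ (Fin n)) :
    wnormSq b L (u - (1 / L i) • blockProj b i w)
      = wnormSq b L u - 2 * ⟪blockProj b i w, blockProj b i u⟫
        + (1 / L i) * ‖blockProj b i w‖ ^ 2 := by
  have hLi := (hL i).ne'
  have hexp : ∀ j : Fin N,
      blockProj b j (u - (1 / L i) • blockProj b i w)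
        = blockProj b j u - (1 / L i) • (if j = i then blockProj b i w else 0) := by
    intro j
    rw [blockProj_sub, blockProj_smul, blockProj_blockProj]
  have key : ∀ j : Fin N,
      L j * ‖blockProj b j (u - (1 / L i) • blockProj b i w)‖ ^ 2
        = L j * ‖blockProj b j u‖ ^ 2
          + (if j = i then
              -(2 * ⟪blockProj b i w, blockProj b i u⟫) + (1 / L i) * ‖blockProj b i w‖ ^ 2
            else 0) := by
    intro j
    rw [hexp j]
    by_cases hj : j = i
    · subst hj
      simp only [if_pos rfl, eq_self_iff_true, if_true]
      rw [norm_sub_sq_real, real_inner_smul_right, norm_smul]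
      have h1 : ‖(1 : ℝ) / L j‖ = 1 / L j := by
        rw [Real.norm_eq_abs, abs_of_pos (by have := hL j; positivity)]
      rw [h1, mul_pow, real_inner_comm (blockProj b j u)]
      field_simp
      ring
    · simp [hj]
  unfold wnormSq
  rw [Finset.sum_congr rfl (fun j _ => key j), Finset.sum_add_distrib,
    Finset.sum_ite_eq' Finset.univ i]
  simp only [Finset.mem_univ, if_pos]
  ring

lemma hasDerivAt_comp_line (Fγ : EuclideanSpace ℝ (Fin n) → ℝ) (hdiff : Differentiable ℝ Fγ)
    (x v : EuclideanSpace ℝ (Fin n)) (t : ℝ) :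
    HasDerivAt (fun s : ℝ => Fγ (x + s • v)) ⟪gradient Fγ (x + t • v), v⟫ t := by
  have hc : HasDerivAt (fun s : ℝ => x + s • v) v t := by
    simpa using ((hasDerivAt_id t).smul_const v).const_add x
  have hF : HasFDerivAt Fγ (InnerProductSpace.toDual ℝ _ (gradient Fγ (x + t • v)))
      (x + t • v) := (hdiff _).hasGradientAt.hasFDerivAt
  exact hF.comp_hasDerivAt t hc

lemma grad_convex_ineq (Fγ : EuclideanSpace ℝ (Fin n) → ℝ)
    (hconv : ConvexOn ℝ Set.univ Fγ) (hdiff : Differentiable ℝ Fγ)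
    (x z : EuclideanSpace ℝ (Fin n)) :
    Fγ x + ⟪gradient Fγ x, z - x⟫ ≤ Fγ z := by
  set ψ : ℝ → ℝ := fun s => Fγ (x + s • (z - x)) with hψ
  have hψconv : ConvexOn ℝ Set.univ ψ := by
    have := hconv.comp_affineMap (AffineMap.lineMap x z)
    have heq : ψ = Fγ ∘ (AffineMap.lineMap x z) := by
      funext s
      simp [hψ, AffineMap.lineMap_apply, vsub_eq_sub, vadd_eq_add, add_comm]
    rw [heq]
    simpa using this
  have hd0 : HasDerivAt ψ ⟪gradient Fγ x, z - x⟫ 0 := by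
    simpa using hasDerivAt_comp_line Fγ hdiff x (z - x) 0
  have hslope := hψconv.le_slope_of_hasDerivAt (Set.mem_univ 0) (Set.mem_univ 1)
    zero_lt_one hd0
  have hsl : slope ψ 0 1 = Fγ z - Fγ x := by
    simp [slope_def_field, hψ]
  rw [hsl] at hslope
  linarith

lemma descent_lemma (L : Fin N → ℝ) (hL : ∀ i, 0 < L i)
    (Fγ : EuclideanSpace ℝ (Fin n) → ℝ) (hdiff : Differentiable ℝ Fγ)
    (hlip : ∀ (x h : EuclideanSpace ℝ (Fin n)) (i : Fin N), blockProj b i h = h →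
      ‖blockProj b i (gradient Fγ (x + h) - gradient Fγ x)‖ ≤ L i * ‖h‖)
    (x h : EuclideanSpace ℝ (Fin n)) (hh : blockProj b i h = h) :
    Fγ (x + h) ≤ Fγ x + ⟪gradient Fγ x, h⟫ + L i / 2 * ‖h‖ ^ 2 := by
  set g := gradient Fγ x with hg
  set φ : ℝ → ℝ := fun t => Fγ (x + t • h) - t * ⟪g, h⟫ - L i * t ^ 2 / 2 * ‖h‖ ^ 2 with hφ
  have hφ' : ∀ t : ℝ, HasDerivAt φ
      (⟪gradient Fγ (x + t • h), h⟫ - ⟪g, h⟫ - L i * t * ‖h‖ ^ 2) t := by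
    intro t
    have h1 := hasDerivAt_comp_line Fγ hdiff x h t
    have h2 : HasDerivAt (fun t : ℝ => t * ⟪g, h⟫) ⟪g, h⟫ t := by
      simpa using (hasDerivAt_id t).mul_const ⟪g, h⟫
    have h3 : HasDerivAt (fun t : ℝ => L i * t ^ 2 / 2 * ‖h‖ ^ 2)
        (L i * t * ‖h‖ ^ 2) t := by
      have := (((hasDerivAt_pow 2 t).const_mul (L i)).div_const 2).mul_const (‖h‖ ^ 2)
      exact this.congr_deriv (by rw [show (2:ℕ) - 1 = 1 from rfl]; push_cast; ring)
    exact (h1.sub h2).sub h3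
  have hanti : AntitoneOn φ (Set.Icc (0:ℝ) 1) := by
    apply antitoneOn_of_deriv_nonpos (convex_Icc 0 1)
    · exact Continuous.continuousOn (by
        rw [continuous_iff_continuousAt]
        exact fun t => (hφ' t).differentiableAt.continuousAt)
    · exact fun t _ => (hφ' t).differentiableAt.differentiableWithinAt
    · intro t ht
      rw [interior_Icc] at ht
      rw [(hφ' t).deriv]
      have hsm : blockProj b i (t • h) = t • h := by rw [blockProj_smul, hh]
      have hlip' := hlip x (t • h) i hsm
      have hinner : ⟪gradient Fγ (x + t • h), h⟫ - ⟪g, h⟫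
          = ⟪blockProj b i (gradient Fγ (x + t • h) - g), h⟫ := by
        have key : ∀ u : EuclideanSpace ℝ (Fin n), ⟪u, h⟫ = ⟪blockProj b i u, h⟫ := by
          intro u
          conv_lhs => rw [← hh]
          rw [real_inner_comm, inner_blockProj, real_inner_comm, ← inner_blockProj]
        rw [← inner_sub_left, key]
      rw [hinner]
      have hcs : ⟪blockProj b i (gradient Fγ (x + t • h) - g), h⟫
          ≤ ‖blockProj b i (gradient Fγ (x + t • h) - g)‖ * ‖h‖ := real_inner_le_norm _ _
      have hns : ‖t • h‖ = t * ‖h‖ := by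
        rw [norm_smul, Real.norm_eq_abs, abs_of_pos ht.1]
      rw [hns] at hlip'
      have hmul := mul_le_mul_of_nonneg_right hlip' (norm_nonneg h)
      nlinarith [hcs, hmul]
  have := hanti (Set.mem_Icc.mpr ⟨le_refl 0, zero_le_one⟩)
    (Set.mem_Icc.mpr ⟨zero_le_one, le_refl 1⟩) zero_le_one
  simp only [hφ, zero_smul, add_zero, one_smul, zero_mul, zero_pow, sub_zero, one_mul,
    one_pow, mul_one] at this
  linarith

/-- let `F_γ` be convex and differentiable with block coordinate-wise
Lipschitz gradient (constants `Lᵢ > 0`), `X*` a nonempty closed convex set and `F* ∈ ℝ`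
with `F_γ(x*) ≤ F*` on `X*`, and suppose the `2`-growth condition
`F_γ(x) − F* ≥ (κ̄/2)‖x − x̄‖₁²` holds for all `x` (`proj` being the `‖·‖₁`-projection
map onto `X*`).  Then for every `x`:
`(1/N) ∑ᵢ [ ½‖Tᵢx − (Tᵢx)‾‖₁² + F_γ(Tᵢx) − F* ]
  ≤ (1 − κ̄/(N(1+κ̄))) [ ½‖x − x̄‖₁² + F_γ(x) − F* ]`. -/
theorem coordinate_descent_one_step_two_growth (n N : ℕ) (hN : 0 < N)
    (b : Fin n → Fin N) (L : Fin N → ℝ) (hL : ∀ i, 0 < L i)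
    (Fγ : EuclideanSpace ℝ (Fin n) → ℝ)
    (hconv : ConvexOn ℝ Set.univ Fγ) (hdiff : Differentiable ℝ Fγ)
    (hlip : ∀ (x h : EuclideanSpace ℝ (Fin n)) (i : Fin N), blockProj b i h = h →
      ‖blockProj b i (gradient Fγ (x + h) - gradient Fγ x)‖ ≤ L i * ‖h‖)
    (Xs : Set (EuclideanSpace ℝ (Fin n)))
    (hXsne : Xs.Nonempty) (hXscl : IsClosed Xs) (hXsconv : Convex ℝ Xs)
    (Fs : ℝ) (hFs : ∀ z ∈ Xs, Fγ z ≤ Fs)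
    (proj : EuclideanSpace ℝ (Fin n) → EuclideanSpace ℝ (Fin n))
    (hprojmem : ∀ z, proj z ∈ Xs)
    (hproj : ∀ z, ∀ w ∈ Xs, wnorm b L (z - proj z) ≤ wnorm b L (z - w))
    (κbar : ℝ) (hκ : 0 < κbar)
    (hgrowth : ∀ x, κbar / 2 * wnormSq b L (x - proj x) ≤ Fγ x - Fs)
    (x : EuclideanSpace ℝ (Fin n)) :
    (1 / (N : ℝ)) * ∑ i : Fin N,
        ((1 / 2) * wnormSq b L (coordStep b L Fγ i x - proj (coordStep b L Fγ i x))
          + Fγ (coordStep b L Fγ i x) - Fs)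
      ≤ (1 - κbar / ((N : ℝ) * (1 + κbar)))
          * ((1 / 2) * wnormSq b L (x - proj x) + Fγ x - Fs) := by
  set g := gradient Fγ x with hg
  set xb := proj x with hxb
  set A := (1 / 2 : ℝ) * wnormSq b L (x - xb) with hA
  set B := Fγ x - Fs with hB
  have hNpos : (0 : ℝ) < (N : ℝ) := by exact_mod_cast hN
  -- growth and nonnegativity
  have hgrow : κbar * ((1 / 2) * wnormSq b L (x - xb)) ≤ B := by
    have := hgrowth x
    rw [← hxb, ← hB] at this
    linarith [this]
  have hAnn : 0 ≤ (1 / 2 : ℝ) * wnormSq b L (x - xb) :=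
    mul_nonneg (by norm_num) (wnormSq_nonneg b L hL _)
  have hBnn : 0 ≤ B := le_trans (mul_nonneg hκ.le hAnn) hgrow
  -- per-index bound
  have hperi : ∀ i : Fin N,
      (1 / 2) * wnormSq b L (coordStep b L Fγ i x - proj (coordStep b L Fγ i x))
        + Fγ (coordStep b L Fγ i x) - Fs
      ≤ A + B - ⟪blockProj b i g, blockProj b i (x - xb)⟫ := by
    intro i
    set y := coordStep b L Fγ i x with hy
    have hLi := hL i
    -- descent
    have hdesc : Fγ y ≤ Fγ x - (1 / 2) * ((1 / L i) * ‖blockProj b i g‖ ^ 2) := by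
      have hstep : y = x + (-(1 / L i)) • blockProj b i g := by
        rw [hy]; unfold coordStep
        rw [← hg]
        module
      have hbp : blockProj b i ((-(1 / L i)) • blockProj b i g)
          = (-(1 / L i)) • blockProj b i g := by
        rw [blockProj_smul, blockProj_blockProj, if_pos rfl]
      have hd := descent_lemma b i L hL Fγ hdiff hlip x _ hbp
      rw [← hstep] at hd
      have hip : ⟪g, (-(1 / L i)) • blockProj b i g⟫
          = -(1 / L i) * ‖blockProj b i g‖ ^ 2 := by
        rw [real_inner_smul_right, real_inner_comm, inner_blockProj,
          real_inner_self_eq_norm_sq]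
      have hnp : ‖(-(1 / L i)) • blockProj b i g‖ ^ 2
          = (1 / L i) ^ 2 * ‖blockProj b i g‖ ^ 2 := by
        rw [norm_smul, mul_pow, Real.norm_eq_abs]
        congr 1
        rw [abs_neg, abs_of_pos (by positivity)]
      rw [hip, hnp] at hd
      have hfs : L i / 2 * ((1 / L i) ^ 2 * ‖blockProj b i g‖ ^ 2)
          - (1 / L i) * ‖blockProj b i g‖ ^ 2
          = -((1 / 2) * ((1 / L i) * ‖blockProj b i g‖ ^ 2)) := by
        field_simp
        ring
      nlinarith [hd, hfs]
    -- distance comparison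
    have hdist : wnormSq b L (y - proj y) ≤ wnormSq b L (y - xb) := by
      have h1 := hproj y xb (hprojmem x)
      have h2 : wnormSq b L (y - proj y) = (wnorm b L (y - proj y)) ^ 2 := by
        rw [wnorm, Real.sq_sqrt (wnormSq_nonneg b L hL _)]
      have h3 : wnormSq b L (y - xb) = (wnorm b L (y - xb)) ^ 2 := by
        rw [wnorm, Real.sq_sqrt (wnormSq_nonneg b L hL _)]
      rw [h2, h3]
      exact pow_le_pow_left₀ (Real.sqrt_nonneg _) h1 2
    -- expansion
    have hexpand : wnormSq b L (y - xb)
        = wnormSq b L (x - xb) - 2 * ⟪blockProj b i g, blockProj b i (x - xb)⟫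
          + (1 / L i) * ‖blockProj b i g‖ ^ 2 := by
      have : y - xb = (x - xb) - (1 / L i) • blockProj b i g := by
        rw [hy]; unfold coordStep
        rw [← hg]
        module
      rw [this, wnormSq_sub_smul b i L hL]
    rw [hA, hB]
    linarith [hdesc, hdist, hexpand]
  -- sum the inner products
  have hsum_inner : ∑ i : Fin N, ⟪blockProj b i g, blockProj b i (x - xb)⟫
      = ⟪g, x - xb⟫ := by
    have h1 : ∀ i : Fin N, ⟪blockProj b i g, blockProj b i (x - xb)⟫
        = ⟪blockProj b i g, x - xb⟫ := fun i => (inner_blockProj b i g (x - xb)).symm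
    rw [Finset.sum_congr rfl fun i _ => h1 i, ← sum_inner, sum_blockProj]
  -- convexity
  have hconvex : B ≤ ⟪g, x - xb⟫ := by
    have h1 := grad_convex_ineq Fγ hconv hdiff x xb
    have h2 : Fγ xb ≤ Fs := hFs xb (hprojmem x)
    have h3 : ⟪g, xb - x⟫ = -⟪g, x - xb⟫ := by
      rw [← inner_neg_right]; congr 1; abel
    rw [← hg, h3] at h1
    rw [hB]
    linarith
  -- sum the per-index bounds
  have hsum : ∑ i : Fin N,
      ((1 / 2) * wnormSq b L (coordStep b L Fγ i x - proj (coordStep b L Fγ i x))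
        + Fγ (coordStep b L Fγ i x) - Fs)
      ≤ (N : ℝ) * (A + B) - B := by
    calc ∑ i : Fin N,
        ((1 / 2) * wnormSq b L (coordStep b L Fγ i x - proj (coordStep b L Fγ i x))
          + Fγ (coordStep b L Fγ i x) - Fs)
        ≤ ∑ i : Fin N, (A + B - ⟪blockProj b i g, blockProj b i (x - xb)⟫) :=
          Finset.sum_le_sum fun i _ => hperi i
      _ = (N : ℝ) * (A + B) - ⟪g, x - xb⟫ := by
          rw [Finset.sum_sub_distrib, hsum_inner, Finset.sum_const, Finset.card_univ,
            nsmul_eq_mul, Fintype.card_fin]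
      _ ≤ (N : ℝ) * (A + B) - B := by linarith
  -- conclude
  have hstep2 : (1 / (N : ℝ)) * ((N : ℝ) * (A + B) - B)
      ≤ (1 - κbar / ((N : ℝ) * (1 + κbar))) * (A + B) := by
    have h1k : (0 : ℝ) < 1 + κbar := by linarith
    have key : κbar * (A + B) * (N : ℝ) ≤ B * ((N : ℝ) * (1 + κbar)) := by
      have hAB : κbar * A ≤ B := by rw [hA] at *; linarith [hgrow]
      nlinarith [mul_le_mul_of_nonneg_right hAB hNpos.le, hBnn, hκ.le]
    have e1 : (1 / (N : ℝ)) * ((N : ℝ) * (A + B) - B) = (A + B) - B / (N : ℝ) := by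
      field_simp
    have e2 : (1 - κbar / ((N : ℝ) * (1 + κbar))) * (A + B)
        = (A + B) - κbar * (A + B) / ((N : ℝ) * (1 + κbar)) := by
      ring
    rw [e1, e2, sub_le_sub_iff_left, div_le_div_iff₀ (by positivity) hNpos]
    linarith [key]
  calc (1 / (N : ℝ)) * ∑ i : Fin N,
      ((1 / 2) * wnormSq b L (coordStep b L Fγ i x - proj (coordStep b L Fγ i x))
        + Fγ (coordStep b L Fγ i x) - Fs)
      ≤ (1 / (N : ℝ)) * ((N : ℝ) * (A + B) - B) := by
        apply mul_le_mul_of_nonneg_left hsum (by positivity)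
    _ ≤ (1 - κbar / ((N : ℝ) * (1 + κbar))) * (A + B) := hstep2
    _ = (1 - κbar / ((N : ℝ) * (1 + κbar)))
          * ((1 / 2) * wnormSq b L (x - proj x) + Fγ x - Fs) := by
        rw [hA, hB, ← hxb]; ring
end
end
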